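/- Let φ_8^{±}(x,y) = x^8 - (84 ± 56√2) x^6 y^2 + (1190 ± 840√2) x^4 y^4 - (2772 ± 1960√2) x^2 y^6 + (577 ± 408√2) y^8 and let P_8^{±}(T) be the zeta polynomial of φ_8^{±} with respect to q = 4 ± 2√2. Then: (i) P_8^{+} has a complex root α with |α| ≠ 1/√(4 + 2√2) (the Riemann hypothesis fails for φ_8^{+}); (ii) every complex root α of P_8^{-} satisfies |α| = 1/√(4 - 2√2) (the Riemann hypothesis holds for φ_8^{-}). -/

import Mathlib

/-- `φ₈⁺(x,y)`. -/
noncomputable def phi8p : ℂ → ℂ → ℂ := fun x y =>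
  x ^ 8 - ((84 + 56 * Real.sqrt 2 : ℝ) : ℂ) * x ^ 6 * y ^ 2
    + ((1190 + 840 * Real.sqrt 2 : ℝ) : ℂ) * x ^ 4 * y ^ 4
    - ((2772 + 1960 * Real.sqrt 2 : ℝ) : ℂ) * x ^ 2 * y ^ 6
    + ((577 + 408 * Real.sqrt 2 : ℝ) : ℂ) * y ^ 8

/-- `φ₈⁻(x,y)`. -/
noncomputable def phi8m : ℂ → ℂ → ℂ := fun x y =>
  x ^ 8 - ((84 - 56 * Real.sqrt 2 : ℝ) : ℂ) * x ^ 6 * y ^ 2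
    + ((1190 - 840 * Real.sqrt 2 : ℝ) : ℂ) * x ^ 4 * y ^ 4
    - ((2772 - 1960 * Real.sqrt 2 : ℝ) : ℂ) * x ^ 2 * y ^ 6
    + ((577 - 408 * Real.sqrt 2 : ℝ) : ℂ) * y ^ 8

/-- `q = 4 + 2√2`. -/
noncomputable def q8p : ℝ := 4 + 2 * Real.sqrt 2

/-- `q = 4 - 2√2`. -/
noncomputable def q8m : ℝ := 4 - 2 * Real.sqrt 2

/-- If `α` is a root of a real monic quadratic with negative discriminant,
then `|α| = √c` where `c` is the constant term. -/
lemma quadAbs (s c : ℝ) (hd : s ^ 2 < 4 * c) (α : ℂ)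
    (h : α ^ 2 + (s : ℂ) * α + (c : ℂ) = 0) : ‖α‖ = Real.sqrt c := by
  have hconj : (starRingEnd ℂ) α ^ 2 + (s : ℂ) * (starRingEnd ℂ) α + (c : ℂ) = 0 := by
    have h2 := congrArg (starRingEnd ℂ) h
    simpa using h2
  have key : ((starRingEnd ℂ) α - α) * ((starRingEnd ℂ) α + α + (s : ℂ)) = 0 := by
    linear_combination hconj - h
  rcases mul_eq_zero.mp key with hk | hk
  · exfalso
    have him : α.im = 0 := Complex.conj_eq_iff_im.mp (sub_eq_zero.mp hk)
    have hre : α.re ^ 2 + s * α.re + c = 0 := by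
      have hα : α = (α.re : ℂ) := by
        rw [← Complex.re_add_im α, him]
        simp
      rw [hα] at h
      exact_mod_cast h
    nlinarith [sq_nonneg (α.re + s / 2)]
  · have hn : (Complex.normSq α : ℂ) = (c : ℂ) := by
      rw [← Complex.mul_conj]
      linear_combination α * hk - h
    have hn' : Complex.normSq α = c := by exact_mod_cast hn
    rw [Complex.norm_def, hn']

set_option maxHeartbeats 4000000 in
/-- Theorem 5.6: the zeta polynomial `P₈⁺` of the extremal formal weight
enumerator `φ₈⁺` (for `q = 4 + 2√2`, `n = 8`, `d = 2`) has a root off the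
circle `|T| = 1/√(4+2√2)` (the Riemann hypothesis fails), while every root of
the zeta polynomial `P₈⁻` of `φ₈⁻` (for `q = 4 - 2√2`) lies on the circle
`|T| = 1/√(4-2√2)` (the Riemann hypothesis holds).  The zeta polynomials are
characterized by: `deg P ≤ n - d = 6` and the coefficient of `T^6` in
`P(T)(y(1-T)+xT)^8/((1-T)(1-qT))` equals `(φ₈^{±}(x,y) - x^8)/(q-1)`. -/
theorem phi8_extremal_riemann_hypothesis (Pp Pm : Polynomial ℂ)
    (hPpdeg : Pp.degree ≤ 6)
    (hPp : ∀ x y : ℂ,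
      (∑ m ∈ Finset.range 7, ∑ k ∈ Finset.range (7 - m),
          Pp.coeff m * (Nat.choose 8 k : ℂ) * y ^ (8 - k) * (x - y) ^ k *
            ∑ j ∈ Finset.range (7 - m - k), (q8p : ℂ) ^ j)
        = (phi8p x y - x ^ 8) / ((q8p : ℂ) - 1))
    (hPmdeg : Pm.degree ≤ 6)
    (hPm : ∀ x y : ℂ,
      (∑ m ∈ Finset.range 7, ∑ k ∈ Finset.range (7 - m),
          Pm.coeff m * (Nat.choose 8 k : ℂ) * y ^ (8 - k) * (x - y) ^ k *
            ∑ j ∈ Finset.range (7 - m - k), (q8m : ℂ) ^ j)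
        = (phi8m x y - x ^ 8) / ((q8m : ℂ) - 1)) :
    (∃ α : ℂ, Pp.IsRoot α ∧ ‖α‖ ≠ 1 / Real.sqrt q8p) ∧
    (∀ α : ℂ, Pm.IsRoot α → ‖α‖ = 1 / Real.sqrt q8m) := by
  have hs2 : Real.sqrt 2 ^ 2 = 2 := Real.sq_sqrt (by norm_num)
  have hs2nn : (0 : ℝ) ≤ Real.sqrt 2 := Real.sqrt_nonneg 2
  have hs2lt : Real.sqrt 2 < 1.5 := by nlinarith
  have hs2gt : 1.4 < Real.sqrt 2 := by nlinarith
  have hu2r : Real.sqrt 10 ^ 2 = 10 := Real.sq_sqrt (by norm_num)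
  have hunn : (0 : ℝ) ≤ Real.sqrt 10 := Real.sqrt_nonneg 10
  have hult : Real.sqrt 10 < 3.2 := by nlinarith
  have hr2 : (Real.sqrt 2 : ℂ) ^ 2 = 2 := by exact_mod_cast congrArg (Complex.ofReal) hs2
  have hu2 : (Real.sqrt 10 : ℂ) ^ 2 = 10 := by exact_mod_cast congrArg (Complex.ofReal) hu2r
  constructor
  · -- part (i): Pp has a root off the circle
    have hq1 : ((q8p : ℝ) : ℂ) - 1 ≠ 0 := by
      have hpos : (0 : ℝ) < q8p - 1 := by unfold q8p; nlinarith
      intro hcon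
      have h0 : ((q8p - 1 : ℝ) : ℂ) = 0 := by push_cast; linear_combination hcon
      rw [Complex.ofReal_eq_zero] at h0
      linarith
    have h0 := hPp 1 1
    have h1 := hPp 2 1
    have h2 := hPp 3 1
    have h3 := hPp 4 1
    have h4 := hPp 5 1
    have h5 := hPp 6 1
    have h6 := hPp 7 1
    rw [eq_div_iff hq1] at h0 h1 h2 h3 h4 h5 h6
    simp only [phi8p, q8p] at h0 h1 h2 h3 h4 h5 h6
    push_cast at h0 h1 h2 h3 h4 h5 h6
    simp only [Finset.sum_range_succ, Finset.sum_range_zero] at h0 h1 h2 h3 h4 h5 h6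
    simp only [show Nat.choose 8 0 = 1 from rfl, show Nat.choose 8 1 = 8 from rfl,
      show Nat.choose 8 2 = 28 from rfl, show Nat.choose 8 3 = 56 from rfl,
      show Nat.choose 8 4 = 70 from rfl, show Nat.choose 8 5 = 56 from rfl,
      show Nat.choose 8 6 = 28 from rfl] at h0 h1 h2 h3 h4 h5 h6
    norm_num at h0 h1 h2 h3 h4 h5 h6
    have e0 : Pp.coeff 0 = (-1 : ℂ) := by
      linear_combination ((1/6720 : ℂ) + (-1/10080 : ℂ) * (Real.sqrt 2:ℂ)) * h0 + ((-1/1120 : ℂ) + (1/1680 : ℂ) * (Real.sqrt 2:ℂ)) * h1 + ((1/448 : ℂ) + (-1/672 : ℂ) * (Real.sqrt 2:ℂ)) * h2 + ((-1/336 : ℂ) + (1/504 : ℂ) * (Real.sqrt 2:ℂ)) * h3 + ((1/448 : ℂ) + (-1/672 : ℂ) * (Real.sqrt 2:ℂ)) * h4 + ((-1/1120 : ℂ) + (1/1680 : ℂ) * (Real.sqrt 2:ℂ)) * h5 + ((1/6720 : ℂ) + (-1/10080 : ℂ) * (Real.sqrt 2:ℂ)) * h6 + ((4 : ℂ) + (4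 : ℂ) * (Pp.coeff 0)) * hr2
    have e1 : Pp.coeff 1 = (2 : ℂ) + (2 : ℂ) * (Real.sqrt 2:ℂ) := by
      linear_combination ((-11/5760 : ℂ) + (5/4032 : ℂ) * (Real.sqrt 2:ℂ)) * h0 + ((37/3360 : ℂ) + (-1/140 : ℂ) * (Real.sqrt 2:ℂ)) * h1 + ((-71/2688 : ℂ) + (23/1344 : ℂ) * (Real.sqrt 2:ℂ)) * h2 + ((17/504 : ℂ) + (-11/504 : ℂ) * (Real.sqrt 2:ℂ)) * h3 + ((-65/2688 : ℂ) + (1/64 : ℂ) * (Real.sqrt 2:ℂ)) * h4 + ((31/3360 : ℂ) + (-1/168 : ℂ) * (Real.sqrt 2:ℂ)) * h5 + ((-59/40320 : ℂ) + (19/20160 : ℂ) * (Real.sqrt 2:ℂ)) * h6 + ((4 : ℂ) + (4 : ℂ) * (Pp.coeff 1) + (12 : ℂ) * (Pp.coeff 0) + (8 : ℂ) * (Real.sqrt 2:ℂ) * (Pp.coeff 0)) * hr2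
    have e2 : Pp.coeff 2 = (8 : ℂ) + (6 : ℂ) * (Real.sqrt 2:ℂ) := by
      linear_combination ((115/8064 : ℂ) + (-23/2520 : ℂ) * (Real.sqrt 2:ℂ)) * h0 + ((-13/168 : ℂ) + (83/1680 : ℂ) * (Real.sqrt 2:ℂ)) * h1 + ((783/4480 : ℂ) + (-187/1680 : ℂ) * (Real.sqrt 2:ℂ)) * h2 + ((-1061/5040 : ℂ) + (337/2520 : ℂ) * (Real.sqrt 2:ℂ)) * h3 + ((1919/13440 : ℂ) + (-19/210 : ℂ) * (Real.sqrt 2:ℂ)) * h4 + ((-29/560 : ℂ) + (11/336 : ℂ) * (Real.sqrt 2:ℂ)) * h5 + ((317/40320 : ℂ) + (-5/1008 : ℂ) * (Real.sqrt 2:ℂ)) * h6 + ((-20 : ℂ) + (4 : ℂ) * (Pp.coeff 2) + (12 : ℂ) * (Pp.coeff 1) + (48 : ℂ) * (Pp.coeff 0) + (8 : ℂ) * (Real.sqrt 2:ℂ) * (Pp.coeff 1) + (56 : ℂ) * (Real.sqrt 2:ℂ) * (Pp.coeff 0) + (16 : ℂ) * (Real.sqrt 2:ℂ)^2 * (Pp.coeff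 0)) * hr2
    have e3 : Pp.coeff 3 = (0:ℂ) := by
      linear_combination ((-467/5760 : ℂ) + (37/720 : ℂ) * (Real.sqrt 2:ℂ)) * h0 + ((2/5 : ℂ) + (-53/210 : ℂ) * (Real.sqrt 2:ℂ)) * h1 + ((-11131/13440 : ℂ) + (437/840 : ℂ) * (Real.sqrt 2:ℂ)) * h2 + ((583/630 : ℂ) + (-1459/2520 : ℂ) * (Real.sqrt 2:ℂ)) * h3 + ((-2647/4480 : ℂ) + (619/1680 : ℂ) * (Real.sqrt 2:ℂ)) * h4 + ((43/210 : ℂ) + (-107/840 : ℂ) * (Real.sqrt 2:ℂ)) * h5 + ((-173/5760 : ℂ) + (47/2520 : ℂ) * (Real.sqrt 2:ℂ)) * h6 + ((-68 : ℂ) + (4 : ℂ) * (Pp.coeff 3) + (12 : ℂ) * (Pp.coeff 2) + (48 : ℂ) * (Pp.coeff 1) + (192 : ℂ) * (Pp.coeff 0) + (8 : ℂ) * (Real.sqrt 2:ℂ) * (Pp.coeff 2) + (56 : ℂ) * (Real.sqrt 2:ℂ) * (Pp.coeff 1) + (320 : ℂ) * (Real.sqrt 2:ℂ) * (Pp.coeff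 0) + (16 : ℂ) * (Real.sqrt 2:ℂ)^2 * (Pp.coeff 1) + (176 : ℂ) * (Real.sqrt 2:ℂ)^2 * (Pp.coeff 0) + (32 : ℂ) * (Real.sqrt 2:ℂ)^3 * (Pp.coeff 0)) * hr2
    have e4 : Pp.coeff 4 = (-56 : ℂ) + (-40 : ℂ) * (Real.sqrt 2:ℂ) := by
      linear_combination ((2207/5760 : ℂ) + (-347/1440 : ℂ) * (Real.sqrt 2:ℂ)) * h0 + ((-541/336 : ℂ) + (281/280 : ℂ) * (Real.sqrt 2:ℂ)) * h1 + ((13129/4480 : ℂ) + (-6089/3360 : ℂ) * (Real.sqrt 2:ℂ)) * h2 + ((-7549/2520 : ℂ) + (2321/1260 : ℂ) * (Real.sqrt 2:ℂ)) * h3 + ((24337/13440 : ℂ) + (-1243/1120 : ℂ) * (Real.sqrt 2:ℂ)) * h4 + ((-339/560 : ℂ) + (311/840 : ℂ) * (Real.sqrt 2:ℂ)) * h5 + ((3491/40320 : ℂ) + (-533/10080 : ℂ) * (Real.sqrt 2:ℂ)) * h6 + ((4 : ℂ) * (Pp.coeff 4) + (12 : ℂ) * (Pp.coeff 3) + (48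 : ℂ) * (Pp.coeff 2) + (192 : ℂ) * (Pp.coeff 1) + (768 : ℂ) * (Pp.coeff 0) + (8 : ℂ) * (Real.sqrt 2:ℂ) * (Pp.coeff 3) + (56 : ℂ) * (Real.sqrt 2:ℂ) * (Pp.coeff 2) + (320 : ℂ) * (Real.sqrt 2:ℂ) * (Pp.coeff 1) + (1664 : ℂ) * (Real.sqrt 2:ℂ) * (Pp.coeff 0) + (16 : ℂ) * (Real.sqrt 2:ℂ)^2 * (Pp.coeff 2) + (176 : ℂ) * (Real.sqrt 2:ℂ)^2 * (Pp.coeff 1) + (1344 : ℂ) * (Real.sqrt 2:ℂ)^2 * (Pp.coeff 0) + (32 : ℂ) * (Real.sqrt 2:ℂ)^3 * (Pp.coeff 1) + (480 : ℂ) * (Real.sqrt 2:ℂ)^3 * (Pp.coeff 0) + (64 : ℂ) * (Real.sqrt 2:ℂ)^4 * (Pp.coeff 0)) * hr2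
    have e5 : Pp.coeff 5 = (-112 : ℂ) + (-80 : ℂ) * (Real.sqrt 2:ℂ) := by
      linear_combination ((-14/9 : ℂ) + (2797/2880 : ℂ) * (Real.sqrt 2:ℂ)) * h0 + ((4007/840 : ℂ) + (-2449/840 : ℂ) * (Real.sqrt 2:ℂ)) * h1 + ((-601/84 : ℂ) + (827/192 : ℂ) * (Real.sqrt 2:ℂ)) * h2 + ((1705/252 : ℂ) + (-1021/252 : ℂ) * (Real.sqrt 2:ℂ)) * h3 + ((-1319/336 : ℂ) + (3151/1344 : ℂ) * (Real.sqrt 2:ℂ)) * h4 + ((215/168 : ℂ) + (-641/840 : ℂ) * (Real.sqrt 2:ℂ)) * h5 + ((-907/5040 : ℂ) + (2161/20160 : ℂ) * (Real.sqrt 2:ℂ)) * h6 + ((464 : ℂ) + (4 : ℂ) * (Pp.coeff 5) + (12 : ℂ) * (Pp.coeff 4) + (48 : ℂ) * (Pp.coeff 3) + (192 : ℂ) * (Pp.coeff 2) + (768 : ℂ) * (Pp.coeff 1) + (3072 : ℂ) * (Pp.coeff 0) + (8 : ℂ) * (Real.sqrt 2:ℂ) * (Pp.coeff 4) + (56 :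 ℂ) * (Real.sqrt 2:ℂ) * (Pp.coeff 3) + (320 : ℂ) * (Real.sqrt 2:ℂ) * (Pp.coeff 2) + (1664 : ℂ) * (Real.sqrt 2:ℂ) * (Pp.coeff 1) + (8192 : ℂ) * (Real.sqrt 2:ℂ) * (Pp.coeff 0) + (16 : ℂ) * (Real.sqrt 2:ℂ)^2 * (Pp.coeff 3) + (176 : ℂ) * (Real.sqrt 2:ℂ)^2 * (Pp.coeff 2) + (1344 : ℂ) * (Real.sqrt 2:ℂ)^2 * (Pp.coeff 1) + (8704 : ℂ) * (Real.sqrt 2:ℂ)^2 * (Pp.coeff 0) + (32 : ℂ) * (Real.sqrt 2:ℂ)^3 * (Pp.coeff 2) + (480 : ℂ) * (Real.sqrt 2:ℂ)^3 * (Pp.coeff 1) + (4608 : ℂ) * (Real.sqrt 2:ℂ)^3 * (Pp.coeff 0) + (64 : ℂ) * (Real.sqrt 2:ℂ)^4 * (Pp.coeff 1) + (1216 : ℂ) * (Real.sqrt 2:ℂ)^4 * (Pp.coeff 0) + (128 : ℂ) * (Real.sqrt 2:ℂ)^5 * (Pp.coeff 0)) * hr2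
    have e6 : Pp.coeff 6 = (160 : ℂ) + (112 : ℂ) * (Real.sqrt 2:ℂ) := by
      linear_combination ((7871/1440 : ℂ) + (-1219/360 : ℂ) * (Real.sqrt 2:ℂ)) * h0 + ((-909/140 : ℂ) + (507/140 : ℂ) * (Real.sqrt 2:ℂ)) * h1 + ((969/112 : ℂ) + (-537/112 : ℂ) * (Real.sqrt 2:ℂ)) * h2 + ((-989/126 : ℂ) + (547/126 : ℂ) * (Real.sqrt 2:ℂ)) * h3 + ((999/224 : ℂ) + (-69/28 : ℂ) * (Real.sqrt 2:ℂ)) * h4 + ((-201/140 : ℂ) + (111/140 : ℂ) * (Real.sqrt 2:ℂ)) * h5 + ((1009/5040 : ℂ) + (-557/5040 : ℂ) * (Real.sqrt 2:ℂ)) * h6 + ((928 : ℂ) + (4 : ℂ) * (Pp.coeff 6) + (12 : ℂ) * (Pp.coeff 5) + (48 : ℂ) * (Pp.coeff 4) + (192 : ℂ) * (Pp.coeff 3) + (768 : ℂ) * (Pp.coeff 2) + (3072 : ℂ) * (Pp.coeff 1) + (12288 : ℂ) * (Pp.coeff 0) + (8 : ℂ) * (Real.sqrt 2:ℂ) * (Pp.coeff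 5) + (56 : ℂ) * (Real.sqrt 2:ℂ) * (Pp.coeff 4) + (320 : ℂ) * (Real.sqrt 2:ℂ) * (Pp.coeff 3) + (1664 : ℂ) * (Real.sqrt 2:ℂ) * (Pp.coeff 2) + (8192 : ℂ) * (Real.sqrt 2:ℂ) * (Pp.coeff 1) + (38912 : ℂ) * (Real.sqrt 2:ℂ) * (Pp.coeff 0) + (16 : ℂ) * (Real.sqrt 2:ℂ)^2 * (Pp.coeff 4) + (176 : ℂ) * (Real.sqrt 2:ℂ)^2 * (Pp.coeff 3) + (1344 : ℂ) * (Real.sqrt 2:ℂ)^2 * (Pp.coeff 2) + (8704 : ℂ) * (Real.sqrt 2:ℂ)^2 * (Pp.coeff 1) + (51200 : ℂ) * (Real.sqrt 2:ℂ)^2 * (Pp.coeff 0) + (32 : ℂ) * (Real.sqrt 2:ℂ)^3 * (Pp.coeff 3) + (480 : ℂ) * (Real.sqrt 2:ℂ)^3 * (Pp.coeff 2) + (4608 : ℂ) * (Real.sqrt 2:ℂ)^3 * (Pp.coeff 1) + (35840 : ℂ) * (Real.sqrt 2:ℂ)^3 * (Pp.coeff 0) + (64 : ℂ) * (Real.sqrt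 2:ℂ)^4 * (Pp.coeff 2) + (1216 : ℂ) * (Real.sqrt 2:ℂ)^4 * (Pp.coeff 1) + (14080 : ℂ) * (Real.sqrt 2:ℂ)^4 * (Pp.coeff 0) + (128 : ℂ) * (Real.sqrt 2:ℂ)^5 * (Pp.coeff 1) + (2944 : ℂ) * (Real.sqrt 2:ℂ)^5 * (Pp.coeff 0) + (256 : ℂ) * (Real.sqrt 2:ℂ)^6 * (Pp.coeff 0)) * hr2
    obtain ⟨a, haI, hfa⟩ : ∃ a ∈ Set.Icc (9/10 : ℝ) 1,
        -1 + (2 + 2*Real.sqrt 2)*a + (8 + 6*Real.sqrt 2)*a^2 - (56 + 40*Real.sqrt 2)*a^4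
          - (112 + 80*Real.sqrt 2)*a^5 + (160 + 112*Real.sqrt 2)*a^6 = 0 := by
      have hcont : Continuous (fun x : ℝ =>
          -1 + (2 + 2*Real.sqrt 2)*x + (8 + 6*Real.sqrt 2)*x^2 - (56 + 40*Real.sqrt 2)*x^4
            - (112 + 80*Real.sqrt 2)*x^5 + (160 + 112*Real.sqrt 2)*x^6) := by fun_prop
      have hmem : (0 : ℝ) ∈ Set.Icc
          (-1 + (2 + 2*Real.sqrt 2)*(9/10 : ℝ) + (8 + 6*Real.sqrt 2)*(9/10 : ℝ)^2
            - (56 + 40*Real.sqrt 2)*(9/10 : ℝ)^4 - (112 + 80*Real.sqrt 2)*(9/10 : ℝ)^5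
            + (160 + 112*Real.sqrt 2)*(9/10 : ℝ)^6)
          (-1 + (2 + 2*Real.sqrt 2)*(1 : ℝ) + (8 + 6*Real.sqrt 2)*(1 : ℝ)^2
            - (56 + 40*Real.sqrt 2)*(1 : ℝ)^4 - (112 + 80*Real.sqrt 2)*(1 : ℝ)^5
            + (160 + 112*Real.sqrt 2)*(1 : ℝ)^6) := by
        constructor
        · nlinarith
        · nlinarith
      obtain ⟨a, haI, hfa⟩ := intermediate_value_Icc (by norm_num : (9/10 : ℝ) ≤ 1)
        hcont.continuousOn hmem
      exact ⟨a, haI, hfa⟩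
    have hdeg7 : Pp.natDegree < 7 := by
      have h6' : Pp.natDegree ≤ 6 := Polynomial.natDegree_le_iff_degree_le.mpr
        (by exact_mod_cast hPpdeg)
      omega
    refine ⟨(a : ℂ), ?_, ?_⟩
    · rw [Polynomial.IsRoot, Polynomial.eval_eq_sum_range' hdeg7]
      simp only [Finset.sum_range_succ, Finset.sum_range_zero]
      have hca : ((-1 + (2 + 2*Real.sqrt 2)*a + (8 + 6*Real.sqrt 2)*a^2 - (56 + 40*Real.sqrt 2)*a^4
          - (112 + 80*Real.sqrt 2)*a^5 + (160 + 112*Real.sqrt 2)*a^6 : ℝ) : ℂ) = 0 := by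
        rw [hfa]; norm_num
      linear_combination (norm := (push_cast; ring1)) e0 + (a : ℂ) * e1 + (a : ℂ)^2 * e2
        + (a : ℂ)^3 * e3 + (a : ℂ)^4 * e4 + (a : ℂ)^5 * e5 + (a : ℂ)^6 * e6 + hca
    · have habs : ‖((a : ℝ) : ℂ)‖ = a := by
        rw [Complex.norm_real, Real.norm_eq_abs, abs_of_nonneg (by linarith [haI.1])]
      rw [habs]
      have h4q : Real.sqrt 4 ≤ Real.sqrt q8p := Real.sqrt_le_sqrt (by unfold q8p; nlinarith)
      have h42 : Real.sqrt 4 = 2 := by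
        rw [show (4 : ℝ) = 2 ^ 2 by norm_num, Real.sqrt_sq (by norm_num : (0:ℝ) ≤ 2)]
      have hsq : (2 : ℝ) ≤ Real.sqrt q8p := by rw [← h42]; exact h4q
      have hle : (1 : ℝ) / Real.sqrt q8p ≤ 1 / 2 := by
        apply one_div_le_one_div_of_le (by norm_num) hsq
      intro heq
      rw [heq] at haI
      linarith [haI.1]
  · -- part (ii): all roots of Pm lie on the circle
    intro α hα
    have hq1 : ((q8m : ℝ) : ℂ) - 1 ≠ 0 := by
      have hpos : (0 : ℝ) < q8m - 1 := by unfold q8m; nlinarith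
      intro hcon
      have h0 : ((q8m - 1 : ℝ) : ℂ) = 0 := by push_cast; linear_combination hcon
      rw [Complex.ofReal_eq_zero] at h0
      linarith
    have h0 := hPm 1 1
    have h1 := hPm 2 1
    have h2 := hPm 3 1
    have h3 := hPm 4 1
    have h4 := hPm 5 1
    have h5 := hPm 6 1
    have h6 := hPm 7 1
    rw [eq_div_iff hq1] at h0 h1 h2 h3 h4 h5 h6
    simp only [phi8m, q8m] at h0 h1 h2 h3 h4 h5 h6
    push_cast at h0 h1 h2 h3 h4 h5 h6
    simp only [Finset.sum_range_succ, Finset.sum_range_zero] at h0 h1 h2 h3 h4 h5 h6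
    simp only [show Nat.choose 8 0 = 1 from rfl, show Nat.choose 8 1 = 8 from rfl,
      show Nat.choose 8 2 = 28 from rfl, show Nat.choose 8 3 = 56 from rfl,
      show Nat.choose 8 4 = 70 from rfl, show Nat.choose 8 5 = 56 from rfl,
      show Nat.choose 8 6 = 28 from rfl] at h0 h1 h2 h3 h4 h5 h6
    norm_num at h0 h1 h2 h3 h4 h5 h6
    have e0 : Pm.coeff 0 = (-1 : ℂ) := by
      linear_combination ((1/6720 : ℂ) + (1/10080 : ℂ) * (Real.sqrt 2:ℂ)) * h0 + ((-1/1120 : ℂ) + (-1/1680 : ℂ) * (Real.sqrt 2:ℂ)) * h1 + ((1/448 : ℂ) + (1/672 : ℂ) * (Real.sqrt 2:ℂ)) * h2 + ((-1/336 : ℂ) + (-1/504 : ℂ) * (Real.sqrt 2:ℂ)) * h3 + ((1/448 : ℂ) + (1/672 : ℂ) * (Real.sqrt 2:ℂ)) * h4 + ((-1/1120 : ℂ) + (-1/1680 : ℂ) * (Real.sqrt 2:ℂ)) * h5 + ((1/6720 : ℂ) + (1/10080 : ℂ) * (Real.sqrt 2:ℂ)) * h6 + ((4 : ℂ) + (4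 : ℂ) * (Pm.coeff 0)) * hr2
    have e1 : Pm.coeff 1 = (2 : ℂ) + (-2 : ℂ) * (Real.sqrt 2:ℂ) := by
      linear_combination ((-11/5760 : ℂ) + (-5/4032 : ℂ) * (Real.sqrt 2:ℂ)) * h0 + ((37/3360 : ℂ) + (1/140 : ℂ) * (Real.sqrt 2:ℂ)) * h1 + ((-71/2688 : ℂ) + (-23/1344 : ℂ) * (Real.sqrt 2:ℂ)) * h2 + ((17/504 : ℂ) + (11/504 : ℂ) * (Real.sqrt 2:ℂ)) * h3 + ((-65/2688 : ℂ) + (-1/64 : ℂ) * (Real.sqrt 2:ℂ)) * h4 + ((31/3360 : ℂ) + (1/168 : ℂ) * (Real.sqrt 2:ℂ)) * h5 + ((-59/40320 : ℂ) + (-19/20160 : ℂ) * (Real.sqrt 2:ℂ)) * h6 + ((4 : ℂ) + (4 : ℂ) * (Pm.coeff 1) + (12 : ℂ) * (Pm.coeff 0) + (-8 : ℂ) * (Real.sqrt 2:ℂ) * (Pm.coeff 0)) * hr2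
    have e2 : Pm.coeff 2 = (8 : ℂ) + (-6 : ℂ) * (Real.sqrt 2:ℂ) := by
      linear_combination ((115/8064 : ℂ) + (23/2520 : ℂ) * (Real.sqrt 2:ℂ)) * h0 + ((-13/168 : ℂ) + (-83/1680 : ℂ) * (Real.sqrt 2:ℂ)) * h1 + ((783/4480 : ℂ) + (187/1680 : ℂ) * (Real.sqrt 2:ℂ)) * h2 + ((-1061/5040 : ℂ) + (-337/2520 : ℂ) * (Real.sqrt 2:ℂ)) * h3 + ((1919/13440 : ℂ) + (19/210 : ℂ) * (Real.sqrt 2:ℂ)) * h4 + ((-29/560 : ℂ) + (-11/336 : ℂ) * (Real.sqrt 2:ℂ)) * h5 + ((317/40320 : ℂ) + (5/1008 : ℂ) * (Real.sqrt 2:ℂ)) * h6 + ((-20 : ℂ) + (4 : ℂ) * (Pm.coeff 2) + (12 : ℂ) * (Pm.coeff 1) + (48 : ℂ) * (Pm.coeff 0) + (-8 : ℂ) * (Real.sqrt 2:ℂ) * (Pm.coeff 1) + (-56 : ℂ) * (Real.sqrt 2:ℂ) * (Pm.coeff 0) + (16 : ℂ) * (Real.sqrt 2:ℂ)^2 * (Pm.coeff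 0)) * hr2
    have e3 : Pm.coeff 3 = (0:ℂ) := by
      linear_combination ((-467/5760 : ℂ) + (-37/720 : ℂ) * (Real.sqrt 2:ℂ)) * h0 + ((2/5 : ℂ) + (53/210 : ℂ) * (Real.sqrt 2:ℂ)) * h1 + ((-11131/13440 : ℂ) + (-437/840 : ℂ) * (Real.sqrt 2:ℂ)) * h2 + ((583/630 : ℂ) + (1459/2520 : ℂ) * (Real.sqrt 2:ℂ)) * h3 + ((-2647/4480 : ℂ) + (-619/1680 : ℂ) * (Real.sqrt 2:ℂ)) * h4 + ((43/210 : ℂ) + (107/840 : ℂ) * (Real.sqrt 2:ℂ)) * h5 + ((-173/5760 : ℂ) + (-47/2520 : ℂ) * (Real.sqrt 2:ℂ)) * h6 + ((-68 : ℂ) + (4 : ℂ) * (Pm.coeff 3) + (12 : ℂ) * (Pm.coeff 2) + (48 : ℂ) * (Pm.coeff 1) + (192 : ℂ) * (Pm.coeff 0) + (-8 : ℂ) * (Real.sqrt 2:ℂ) * (Pm.coeff 2) + (-56 : ℂ) * (Real.sqrt 2:ℂ) * (Pm.coeff 1) + (-320 : ℂ) * (Real.sqrt 2:ℂ) * (Pm.coeff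 0) + (16 : ℂ) * (Real.sqrt 2:ℂ)^2 * (Pm.coeff 1) + (176 : ℂ) * (Real.sqrt 2:ℂ)^2 * (Pm.coeff 0) + (-32 : ℂ) * (Real.sqrt 2:ℂ)^3 * (Pm.coeff 0)) * hr2
    have e4 : Pm.coeff 4 = (-56 : ℂ) + (40 : ℂ) * (Real.sqrt 2:ℂ) := by
      linear_combination ((2207/5760 : ℂ) + (347/1440 : ℂ) * (Real.sqrt 2:ℂ)) * h0 + ((-541/336 : ℂ) + (-281/280 : ℂ) * (Real.sqrt 2:ℂ)) * h1 + ((13129/4480 : ℂ) + (6089/3360 : ℂ) * (Real.sqrt 2:ℂ)) * h2 + ((-7549/2520 : ℂ) + (-2321/1260 : ℂ) * (Real.sqrt 2:ℂ)) * h3 + ((24337/13440 : ℂ) + (1243/1120 : ℂ) * (Real.sqrt 2:ℂ)) * h4 + ((-339/560 : ℂ) + (-311/840 : ℂ) * (Real.sqrt 2:ℂ)) * h5 + ((3491/40320 : ℂ) + (533/10080 : ℂ) * (Real.sqrt 2:ℂ)) * h6 + ((4 : ℂ) * (Pm.coeff 4) + (12 : ℂ) * (Pm.coeff 3) + (48 :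 ℂ) * (Pm.coeff 2) + (192 : ℂ) * (Pm.coeff 1) + (768 : ℂ) * (Pm.coeff 0) + (-8 : ℂ) * (Real.sqrt 2:ℂ) * (Pm.coeff 3) + (-56 : ℂ) * (Real.sqrt 2:ℂ) * (Pm.coeff 2) + (-320 : ℂ) * (Real.sqrt 2:ℂ) * (Pm.coeff 1) + (-1664 : ℂ) * (Real.sqrt 2:ℂ) * (Pm.coeff 0) + (16 : ℂ) * (Real.sqrt 2:ℂ)^2 * (Pm.coeff 2) + (176 : ℂ) * (Real.sqrt 2:ℂ)^2 * (Pm.coeff 1) + (1344 : ℂ) * (Real.sqrt 2:ℂ)^2 * (Pm.coeff 0) + (-32 : ℂ) * (Real.sqrt 2:ℂ)^3 * (Pm.coeff 1) + (-480 : ℂ) * (Real.sqrt 2:ℂ)^3 * (Pm.coeff 0) + (64 : ℂ) * (Real.sqrt 2:ℂ)^4 * (Pm.coeff 0)) * hr2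
    have e5 : Pm.coeff 5 = (-112 : ℂ) + (80 : ℂ) * (Real.sqrt 2:ℂ) := by
      linear_combination ((-14/9 : ℂ) + (-2797/2880 : ℂ) * (Real.sqrt 2:ℂ)) * h0 + ((4007/840 : ℂ) + (2449/840 : ℂ) * (Real.sqrt 2:ℂ)) * h1 + ((-601/84 : ℂ) + (-827/192 : ℂ) * (Real.sqrt 2:ℂ)) * h2 + ((1705/252 : ℂ) + (1021/252 : ℂ) * (Real.sqrt 2:ℂ)) * h3 + ((-1319/336 : ℂ) + (-3151/1344 : ℂ) * (Real.sqrt 2:ℂ)) * h4 + ((215/168 : ℂ) + (641/840 : ℂ) * (Real.sqrt 2:ℂ)) * h5 + ((-907/5040 : ℂ) + (-2161/20160 : ℂ) * (Real.sqrt 2:ℂ)) * h6 + ((464 : ℂ) + (4 : ℂ) * (Pm.coeff 5) + (12 : ℂ) * (Pm.coeff 4) + (48 : ℂ) * (Pm.coeff 3) + (192 : ℂ) * (Pm.coeff 2) + (768 : ℂ) * (Pm.coeff 1) + (3072 : ℂ) * (Pm.coeff 0) + (-8 : ℂ) * (Real.sqrt 2:ℂ) * (Pm.coeff 4) + (-56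 : ℂ) * (Real.sqrt 2:ℂ) * (Pm.coeff 3) + (-320 : ℂ) * (Real.sqrt 2:ℂ) * (Pm.coeff 2) + (-1664 : ℂ) * (Real.sqrt 2:ℂ) * (Pm.coeff 1) + (-8192 : ℂ) * (Real.sqrt 2:ℂ) * (Pm.coeff 0) + (16 : ℂ) * (Real.sqrt 2:ℂ)^2 * (Pm.coeff 3) + (176 : ℂ) * (Real.sqrt 2:ℂ)^2 * (Pm.coeff 2) + (1344 : ℂ) * (Real.sqrt 2:ℂ)^2 * (Pm.coeff 1) + (8704 : ℂ) * (Real.sqrt 2:ℂ)^2 * (Pm.coeff 0) + (-32 : ℂ) * (Real.sqrt 2:ℂ)^3 * (Pm.coeff 2) + (-480 : ℂ) * (Real.sqrt 2:ℂ)^3 * (Pm.coeff 1) + (-4608 : ℂ) * (Real.sqrt 2:ℂ)^3 * (Pm.coeff 0) + (64 : ℂ) * (Real.sqrt 2:ℂ)^4 * (Pm.coeff 1) + (1216 : ℂ) * (Real.sqrt 2:ℂ)^4 * (Pm.coeff 0) + (-128 : ℂ) * (Real.sqrt 2:ℂ)^5 * (Pm.coeff 0)) * hr2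
    have e6 : Pm.coeff 6 = (160 : ℂ) + (-112 : ℂ) * (Real.sqrt 2:ℂ) := by
      linear_combination ((7871/1440 : ℂ) + (1219/360 : ℂ) * (Real.sqrt 2:ℂ)) * h0 + ((-909/140 : ℂ) + (-507/140 : ℂ) * (Real.sqrt 2:ℂ)) * h1 + ((969/112 : ℂ) + (537/112 : ℂ) * (Real.sqrt 2:ℂ)) * h2 + ((-989/126 : ℂ) + (-547/126 : ℂ) * (Real.sqrt 2:ℂ)) * h3 + ((999/224 : ℂ) + (69/28 : ℂ) * (Real.sqrt 2:ℂ)) * h4 + ((-201/140 : ℂ) + (-111/140 : ℂ) * (Real.sqrt 2:ℂ)) * h5 + ((1009/5040 : ℂ) + (557/5040 : ℂ) * (Real.sqrt 2:ℂ)) * h6 + ((928 : ℂ) + (4 : ℂ) * (Pm.coeff 6) + (12 : ℂ) * (Pm.coeff 5) + (48 : ℂ) * (Pm.coeff 4) + (192 : ℂ) * (Pm.coeff 3) + (768 : ℂ) * (Pm.coeff 2) + (3072 : ℂ) * (Pm.coeff 1) + (12288 : ℂ) * (Pm.coeff 0) + (-8 : ℂ) * (Real.sqrt 2:ℂ) *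 (Pm.coeff 5) + (-56 : ℂ) * (Real.sqrt 2:ℂ) * (Pm.coeff 4) + (-320 : ℂ) * (Real.sqrt 2:ℂ) * (Pm.coeff 3) + (-1664 : ℂ) * (Real.sqrt 2:ℂ) * (Pm.coeff 2) + (-8192 : ℂ) * (Real.sqrt 2:ℂ) * (Pm.coeff 1) + (-38912 : ℂ) * (Real.sqrt 2:ℂ) * (Pm.coeff 0) + (16 : ℂ) * (Real.sqrt 2:ℂ)^2 * (Pm.coeff 4) + (176 : ℂ) * (Real.sqrt 2:ℂ)^2 * (Pm.coeff 3) + (1344 : ℂ) * (Real.sqrt 2:ℂ)^2 * (Pm.coeff 2) + (8704 : ℂ) * (Real.sqrt 2:ℂ)^2 * (Pm.coeff 1) + (51200 : ℂ) * (Real.sqrt 2:ℂ)^2 * (Pm.coeff 0) + (-32 : ℂ) * (Real.sqrt 2:ℂ)^3 * (Pm.coeff 3) + (-480 : ℂ) * (Real.sqrt 2:ℂ)^3 * (Pm.coeff 2) + (-4608 : ℂ) * (Real.sqrt 2:ℂ)^3 * (Pm.coeff 1) + (-35840 : ℂ) * (Real.sqrt 2:ℂ)^3 * (Pm.coeff 0)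 + (64 : ℂ) * (Real.sqrt 2:ℂ)^4 * (Pm.coeff 2) + (1216 : ℂ) * (Real.sqrt 2:ℂ)^4 * (Pm.coeff 1) + (14080 : ℂ) * (Real.sqrt 2:ℂ)^4 * (Pm.coeff 0) + (-128 : ℂ) * (Real.sqrt 2:ℂ)^5 * (Pm.coeff 1) + (-2944 : ℂ) * (Real.sqrt 2:ℂ)^5 * (Pm.coeff 0) + (256 : ℂ) * (Real.sqrt 2:ℂ)^6 * (Pm.coeff 0)) * hr2
    have hdeg7 : Pm.natDegree < 7 := by
      have h6' : Pm.natDegree ≤ 6 := Polynomial.natDegree_le_iff_degree_le.mpr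
        (by exact_mod_cast hPmdeg)
      omega
    rw [Polynomial.IsRoot, Polynomial.eval_eq_sum_range' hdeg7] at hα
    simp only [Finset.sum_range_succ, Finset.sum_range_zero] at hα
    have hsext : ((-1 : ℂ)) * α^0 + ((2 : ℂ) + (-2 : ℂ) * (Real.sqrt 2:ℂ)) * α^1 + ((8 : ℂ) + (-6 : ℂ) * (Real.sqrt 2:ℂ)) * α^2 + ((-56 : ℂ) + (40 : ℂ) * (Real.sqrt 2:ℂ)) * α^4 + ((-112 : ℂ) + (80 : ℂ) * (Real.sqrt 2:ℂ)) * α^5 + ((160 : ℂ) + (-112 : ℂ) * (Real.sqrt 2:ℂ)) * α^6 = 0 := by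
      linear_combination hα - e0 - α * e1 - α^2 * e2 - α^3 * e3 - α^4 * e4 - α^5 * e5 - α^6 * e6
    -- constant of all quadratic factors
    have hcpos : (0 : ℝ) < (2 + Real.sqrt 2) / 4 := by positivity
    have hcq : Real.sqrt ((2 + Real.sqrt 2) / 4) = 1 / Real.sqrt q8m := by
      have hqpos : (0 : ℝ) < q8m := by unfold q8m; nlinarith
      have hmul : ((2 + Real.sqrt 2) / 4) * q8m = 1 := by
        unfold q8m; linear_combination (-(1:ℝ)/2) * hs2
      have hinv : ((2 + Real.sqrt 2) / 4 : ℝ) = q8m⁻¹ :=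
        eq_inv_of_mul_eq_one_left hmul
      rw [hinv, Real.sqrt_inv, one_div]
    have hfac1 : ((4 - 2*(Real.sqrt 2:ℂ))*α^2 - 1) *
        ((24 - 16*(Real.sqrt 2:ℂ))*α^4 - (16 - 12*(Real.sqrt 2:ℂ))*α^3
          - (4 - 4*(Real.sqrt 2:ℂ))*α^2 - (2 - 2*(Real.sqrt 2:ℂ))*α + 1) = 0 := by
      linear_combination hsext + ((-4 : ℂ) * α^3 + (-8 : ℂ) * α^4 + (-24 : ℂ) * α^5 + (32 : ℂ) * α^6) * hr2
    rcases mul_eq_zero.mp hfac1 with hA | hB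
    · have hc' : ((Real.sqrt ((2 + Real.sqrt 2)/4) : ℝ) : ℂ)^2
          = (((2 + Real.sqrt 2)/4 : ℝ) : ℂ) := by
        rw [← Complex.ofReal_pow, Real.sq_sqrt (le_of_lt hcpos)]
      have hsplit : (α - ((Real.sqrt ((2 + Real.sqrt 2)/4) : ℝ) : ℂ)) *
          (α + ((Real.sqrt ((2 + Real.sqrt 2)/4) : ℝ) : ℂ)) = 0 := by
        linear_combination (norm := (push_cast; ring1))
          ((2 + (Real.sqrt 2:ℂ))/4) * hA + (α^2/2) * hr2 - hc'
      rcases mul_eq_zero.mp hsplit with h' | h'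
      · have hval : α = ((Real.sqrt ((2 + Real.sqrt 2)/4) : ℝ) : ℂ) := sub_eq_zero.mp h'
        rw [hval, Complex.norm_real, Real.norm_eq_abs, abs_of_nonneg (Real.sqrt_nonneg _), hcq]
      · have hval : α = -((Real.sqrt ((2 + Real.sqrt 2)/4) : ℝ) : ℂ) := by
          linear_combination h'
        rw [hval, norm_neg, Complex.norm_real, Real.norm_eq_abs, abs_of_nonneg (Real.sqrt_nonneg _), hcq]
    · have hfac2 : (24 - 16*(Real.sqrt 2:ℂ)) *
          (α^2 + (((Real.sqrt 2 + Real.sqrt 10)/4 : ℝ) : ℂ) * α + (((2 + Real.sqrt 2)/4 : ℝ) : ℂ)) *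
          (α^2 + (((Real.sqrt 2 - Real.sqrt 10)/4 : ℝ) : ℂ) * α + (((2 + Real.sqrt 2)/4 : ℝ) : ℂ)) = 0 := by
        linear_combination (norm := (push_cast; ring1)) hB + ((-5/2 : ℂ) + (-1 : ℂ) * α + (-13/2 : ℂ) * α^2 + (-8 : ℂ) * α^3 + (-1 : ℂ) * (Real.sqrt 2:ℂ) + (-2 : ℂ) * (Real.sqrt 2:ℂ) * α + (-1 : ℂ) * (Real.sqrt 2:ℂ) * α^2) * hr2 + ((-3/2 : ℂ) * α^2 + (Real.sqrt 2:ℂ) * α^2) * hu2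
      rcases mul_eq_zero.mp hfac2 with hC | hq2
      · rcases mul_eq_zero.mp hC with h24 | hq1'
        · exfalso
          have h24' : ((24 - 16 * Real.sqrt 2 : ℝ) : ℂ) = 0 := by
            push_cast; linear_combination h24
          rw [Complex.ofReal_eq_zero] at h24'
          nlinarith
        · have hd : ((Real.sqrt 2 + Real.sqrt 10)/4)^2 < 4 * ((2 + Real.sqrt 2)/4) := by
            have hprod : 0 < (1.5 - Real.sqrt 2) * (3.2 - Real.sqrt 10) :=
              mul_pos (by linarith) (by linarith)
            nlinarith
          rw [quadAbs _ _ hd α hq1', hcq]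
      · have hd : ((Real.sqrt 2 - Real.sqrt 10)/4)^2 < 4 * ((2 + Real.sqrt 2)/4) := by
          nlinarith [mul_nonneg hs2nn hunn]
        rw [quadAbs _ _ hd α hq2, hcq]
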